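/- arXiv:2411.15817 — 4 statements merged into one kernel-verified Lean document; each statement's English description precedes it below -/
import Mathlib

section
/- For all λ, λ₁, μ, μ₁ > 0, the quantity μ₁ log(λ/λ₁) + μ(λ₁/λ − 1) + log(Γ(μ₁)/Γ(μ)) + (μ − μ₁)ψ(μ) is nonnegative, and it equals zero if and only if λ = λ₁ and μ = μ₁. -/
/-- Digamma `ψ(z) = Γ'(z)/Γ(z)`. -/
noncomputable def digamma (z : ℝ) : ℝ := deriv Real.Gamma z / Real.Gamma z

open Real Set Filter Topology

namespace KLGammaAux

lemma hasDerivAt_logGamma {x : ℝ} (hx : 0 < x) :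
    HasDerivAt (fun t => Real.log (Real.Gamma t)) (digamma x) x := by
  have hd : DifferentiableAt ℝ Real.Gamma x :=
    Real.differentiableAt_Gamma fun m =>
      ((neg_nonpos.mpr (Nat.cast_nonneg m)).trans_lt hx).ne'
  exact hd.hasDerivAt.log (Real.Gamma_pos_of_pos hx).ne'

lemma log_Gamma_add_one {x : ℝ} (hx : 0 < x) :
    Real.log (Real.Gamma (x + 1)) = Real.log x + Real.log (Real.Gamma x) := by
  rw [Real.Gamma_add_one hx.ne', Real.log_mul hx.ne' (Real.Gamma_pos_of_pos hx).ne']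

lemma digamma_add_one {x : ℝ} (hx : 0 < x) : digamma (x + 1) = digamma x + 1 / x := by
  have h1 : HasDerivAt (fun t => Real.log (Real.Gamma (t + 1))) (digamma (x + 1)) x :=
    (hasDerivAt_logGamma (by linarith)).comp_add_const x 1
  have h2 : HasDerivAt (fun t => Real.log t + Real.log (Real.Gamma t))
      (1 / x + digamma x) x := by
    exact ((Real.hasDerivAt_log hx.ne').add (hasDerivAt_logGamma hx)).congr_deriv (by rw [one_div])
  have heq : (fun t => Real.log (Real.Gamma (t + 1)))
      =ᶠ[𝓝 x] fun t => Real.log t + Real.log (Real.Gamma t) := by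
    filter_upwards [eventually_gt_nhds hx] with t ht using log_Gamma_add_one ht
  have := (h1.congr_of_eventuallyEq heq.symm).unique h2
  linarith

lemma digamma_add_nat {x : ℝ} (hx : 0 < x) (n : ℕ) :
    digamma (x + n) = digamma x + ∑ k ∈ Finset.range n, 1 / (x + k) := by
  induction n with
  | zero => simp
  | succ n ih =>
    have h : x + (n + 1 : ℕ) = (x + n) + 1 := by push_cast; ring
    rw [h, digamma_add_one (by positivity), ih, Finset.sum_range_succ]
    ring

lemma digamma_le_log {x : ℝ} (hx : 0 < x) : digamma x ≤ Real.log x := by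
  have hc := Real.convexOn_log_Gamma
  have hd : DifferentiableAt ℝ (Real.log ∘ Real.Gamma) x := (hasDerivAt_logGamma hx).differentiableAt
  have h := hc.deriv_le_slope (mem_Ioi.mpr hx) (mem_Ioi.mpr (by linarith : (0:ℝ) < x + 1))
    (by linarith) hd
  have hder : deriv (Real.log ∘ Real.Gamma) x = digamma x := (hasDerivAt_logGamma hx).deriv
  rw [hder, slope_def_field] at h
  simpa [Function.comp, log_Gamma_add_one hx] using h

lemma log_le_digamma {x : ℝ} (hx : 1 < x) : Real.log (x - 1) ≤ digamma x := by
  have hx1 : (0:ℝ) < x - 1 := by linarith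
  have hc := Real.convexOn_log_Gamma
  have hd : DifferentiableAt ℝ (Real.log ∘ Real.Gamma) x :=
    (hasDerivAt_logGamma (by linarith)).differentiableAt
  have h := hc.slope_le_deriv (mem_Ioi.mpr hx1) (mem_Ioi.mpr (by linarith : (0:ℝ) < x))
    (by linarith) hd
  have hder : deriv (Real.log ∘ Real.Gamma) x = digamma x :=
    (hasDerivAt_logGamma (by linarith)).deriv
  rw [hder, slope_def_field] at h
  have hΓ : Real.log (Real.Gamma x) = Real.log (x - 1) + Real.log (Real.Gamma (x - 1)) := by
    have := log_Gamma_add_one hx1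
    simpa using this
  calc Real.log (x - 1)
      = (Real.log (Real.Gamma x) - Real.log (Real.Gamma (x-1))) / (x - (x-1)) := by
        rw [hΓ]; field_simp; ring
    _ ≤ digamma x := by simpa [Function.comp] using h

/-- Key elementary inequality: the function `u ↦ 1/u - (log (u+1) - log u)` is antitone,
with quantitative gap. -/
lemma h_gap {s t : ℝ} (hs : 0 < s) (hst : s ≤ t) :
    (Real.log (s + 1) - Real.log s) - (Real.log (t + 1) - Real.log t)
      ≤ 1 / s - 1 / t - (t - s) / (s * t * (t + 1)) := by
  have ht : 0 < t := hs.trans_le hst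
  have hz : (0:ℝ) < (s + 1) * t / (s * (t + 1)) := by positivity
  have hlog : Real.log ((s + 1) * t / (s * (t + 1))) ≤ (s + 1) * t / (s * (t + 1)) - 1 :=
    Real.log_le_sub_one_of_pos hz
  have hexp : Real.log ((s + 1) * t / (s * (t + 1)))
      = (Real.log (s + 1) - Real.log s) - (Real.log (t + 1) - Real.log t) := by
    rw [Real.log_div (by positivity) (by positivity), Real.log_mul (by positivity) ht.ne',
      Real.log_mul hs.ne' (by positivity)]
    ring
  have harith : (s + 1) * t / (s * (t + 1)) - 1
      = 1 / s - 1 / t - (t - s) / (s * t * (t + 1)) := by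
    field_simp
    ring
  rw [hexp, harith] at hlog
  exact hlog

/-- Strict monotonicity of `ψ(t) - log t`. -/
lemma phi_lt {a b : ℝ} (ha : 0 < a) (hab : a < b) :
    digamma a - Real.log a < digamma b - Real.log b := by
  have hb : 0 < b := ha.trans hab
  set δ : ℝ := (b - a) / (a * b * (b + 1)) with hδdef
  have hδ : 0 < δ := div_pos (by linarith) (by positivity)
  have key : ∀ n : ℕ, 1 ≤ n →
      digamma a - Real.log a + δ - 1 / (b + n - 1) ≤ digamma b - Real.log b := by
    intro n hn
    have hn1 : (1:ℝ) ≤ (n:ℝ) := by exact_mod_cast hn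
    -- recurrences
    have hra := digamma_add_nat ha n
    have hrb := digamma_add_nat hb n
    -- slope bounds
    have hub : digamma (a + n) ≤ Real.log (a + n) := digamma_le_log (by positivity)
    have hlb : Real.log (b + n - 1) ≤ digamma (b + n) := log_le_digamma (by linarith)
    -- termwise bound for the sums
    have hterm : ∀ k ∈ Finset.range n,
        (Real.log (a + k + 1) - Real.log (a + k)) - (Real.log (b + k + 1) - Real.log (b + k))
          + (if k = 0 then δ else 0)
          ≤ 1 / (a + k) - 1 / (b + k) := by
      intro k _
      have hak : (0:ℝ) < a + k := by positivity
      have habk : a + k ≤ b + k := by linarith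
      have := h_gap hak habk
      have hbk : (0:ℝ) < b + k := by positivity
      rcases eq_or_ne k 0 with rfl | hk
      · simp only [if_pos rfl]
        have hgap : (b + 0 - (a + 0)) / ((a + 0) * (b + 0) * (b + 0 + 1)) = δ := by
          rw [hδdef]; ring_nf
        push_cast at this ⊢
        linarith [this, hgap.ge, hgap.le]
      · simp only [if_neg hk, add_zero]
        have hpos : 0 ≤ ((b:ℝ) + k - (a + k)) / ((a + k) * (b + k) * (b + k + 1)) :=
          div_nonneg (by linarith) (by positivity)
        linarith
    have hsum := Finset.sum_le_sum hterm
    -- telescoping sums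
    have htel : ∀ c : ℝ, 0 < c → ∑ k ∈ Finset.range n,
        (Real.log (c + k + 1) - Real.log (c + k)) = Real.log (c + n) - Real.log c := by
      intro c hc
      have := Finset.sum_range_sub (fun k : ℕ => Real.log (c + k)) n
      simp only [Nat.cast_add, Nat.cast_one, Nat.cast_zero, add_zero] at this
      rw [← this]
      apply Finset.sum_congr rfl
      intro k _
      ring_nf
    have hdelta : ∑ k ∈ Finset.range n, (if k = 0 then δ else 0) = δ := by
      rw [Finset.sum_ite_eq' (Finset.range n) 0 (fun _ => δ)]
      simp [Finset.mem_range, Nat.lt_of_lt_of_le Nat.zero_lt_one hn]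
    have hsplit : ∑ k ∈ Finset.range n,
        ((Real.log (a + k + 1) - Real.log (a + k)) - (Real.log (b + k + 1) - Real.log (b + k))
          + (if k = 0 then δ else 0))
        = (Real.log (a + n) - Real.log a) - (Real.log (b + n) - Real.log b) + δ := by
      rw [Finset.sum_add_distrib, Finset.sum_sub_distrib, htel a ha, htel b hb, hdelta]
    rw [hsplit] at hsum
    have hsum2 : ∑ k ∈ Finset.range n, (1 / (a + k) - 1 / (b + k))
        = (∑ k ∈ Finset.range n, 1 / (a + (k:ℝ))) - ∑ k ∈ Finset.range n, 1 / (b + (k:ℝ)) :=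
      Finset.sum_sub_distrib _ _
    rw [hsum2] at hsum
    -- log (b+n) - log (b+n-1) ≤ 1 / (b+n-1)
    have hlast : Real.log (b + n) - Real.log (b + n - 1) ≤ 1 / (b + n - 1) := by
      have h1 : (0:ℝ) < b + n - 1 := by linarith
      have h2 : (0:ℝ) < (b + n) / (b + n - 1) := by positivity
      have := Real.log_le_sub_one_of_pos h2
      rw [Real.log_div (by linarith) h1.ne'] at this
      have h3 : (b + (n:ℝ)) / (b + n - 1) - 1 = 1 / (b + n - 1) := by field_simp; ring
      linarith [h3 ▸ this]
    linarith [hra, hrb, hub, hlb, hsum, hlast]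
  -- take the limit n → ∞
  have h1 : Filter.Tendsto (fun n : ℕ => b + (n:ℝ) - 1) Filter.atTop Filter.atTop := by
    have h0 : Filter.Tendsto (fun n : ℕ => (n:ℝ) + (b - 1)) Filter.atTop Filter.atTop :=
      Filter.tendsto_atTop_add_const_right Filter.atTop (b - 1)
        (tendsto_natCast_atTop_atTop (R := ℝ))
    exact h0.congr (fun n => by ring)
  have h2 : Filter.Tendsto (fun n : ℕ => 1 / (b + (n:ℝ) - 1)) Filter.atTop (𝓝 0) := by
    exact h1.inv_tendsto_atTop.congr (fun n => by simp [one_div, Pi.inv_apply])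
  have hlim : Filter.Tendsto (fun n : ℕ => digamma a - Real.log a + δ - 1 / (b + n - 1))
      Filter.atTop (𝓝 (digamma a - Real.log a + δ - 0)) :=
    Filter.Tendsto.const_sub _ h2
  have hfin : digamma a - Real.log a + δ - 0 ≤ digamma b - Real.log b := by
    apply le_of_tendsto hlim
    filter_upwards [Filter.eventually_ge_atTop 1] with n hn using key n hn
  linarith



noncomputable def gfun (μ t : ℝ) : ℝ :=
  Real.log (Real.Gamma t) - t * Real.log t + t + t * Real.log μ - μ
    - Real.log (Real.Gamma μ) + (μ - t) * digamma μ

lemma hasDerivAt_gfun {μ t : ℝ} (ht : 0 < t) :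
    HasDerivAt (gfun μ) ((digamma t - Real.log t) - (digamma μ - Real.log μ)) t := by
  have h1 := hasDerivAt_logGamma ht
  have h2 := Real.hasDerivAt_mul_log ht.ne'
  have h3 : HasDerivAt (fun u : ℝ => u) 1 t := hasDerivAt_id t
  have h4 : HasDerivAt (fun u : ℝ => u * Real.log μ) (Real.log μ) t := by
    simpa using (hasDerivAt_id t).mul_const (Real.log μ)
  have h5 : HasDerivAt (fun u : ℝ => (μ - u) * digamma μ) (-digamma μ) t := by
    simpa using ((hasDerivAt_id t).const_sub μ).mul_const (digamma μ)
  have key := (((((h1.sub h2).add h3).add h4).sub_const μ).sub_const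
    (Real.log (Real.Gamma μ))).add h5
  unfold gfun
  exact key.congr_deriv (by ring)

lemma gfun_self (μ : ℝ) : gfun μ μ = 0 := by unfold gfun; ring

lemma gfun_pos {μ t : ℝ} (hμ : 0 < μ) (ht : 0 < t) (hne : t ≠ μ) : 0 < gfun μ t := by
  rcases hne.lt_or_gt with h | h
  · have hanti : StrictAntiOn (gfun μ) (Set.Icc t μ) := by
      apply strictAntiOn_of_deriv_neg (convex_Icc t μ)
      · intro x hx
        exact (hasDerivAt_gfun (lt_of_lt_of_le ht hx.1)).continuousAt.continuousWithinAt
      · intro x hx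
        rw [interior_Icc] at hx
        rw [(hasDerivAt_gfun (ht.trans hx.1)).deriv]
        have := phi_lt (ht.trans hx.1) hx.2
        linarith
    have h2 := hanti (Set.left_mem_Icc.mpr h.le) (Set.right_mem_Icc.mpr h.le) h
    rw [gfun_self] at h2
    linarith
  · have hmono : StrictMonoOn (gfun μ) (Set.Icc μ t) := by
      apply strictMonoOn_of_deriv_pos (convex_Icc μ t)
      · intro x hx
        exact (hasDerivAt_gfun (lt_of_lt_of_le hμ hx.1)).continuousAt.continuousWithinAt
      · intro x hx
        rw [interior_Icc] at hx
        rw [(hasDerivAt_gfun (hμ.trans hx.1)).deriv]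
        have := phi_lt hμ hx.1
        linarith
    have h2 := hmono (Set.left_mem_Icc.mpr h.le) (Set.right_mem_Icc.mpr h.le) h
    rw [gfun_self] at h2
    linarith

end KLGammaAux

open KLGammaAux in
/-- KL divergence between two gamma distributions is nonnegative,
and vanishes iff the parameters coincide. -/
theorem kl_gamma_nonneg (l l₁ μ μ₁ : ℝ) (hl : 0 < l) (hl₁ : 0 < l₁)
    (hμ : 0 < μ) (hμ₁ : 0 < μ₁) :
    0 ≤ μ₁ * Real.log (l / l₁) + μ * (l₁ / l - 1)
        + Real.log (Real.Gamma μ₁ / Real.Gamma μ) + (μ - μ₁) * digamma μ ∧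
      (μ₁ * Real.log (l / l₁) + μ * (l₁ / l - 1)
        + Real.log (Real.Gamma μ₁ / Real.Gamma μ) + (μ - μ₁) * digamma μ = 0
        ↔ l = l₁ ∧ μ = μ₁) := by
  have hΓμ := Real.Gamma_pos_of_pos hμ
  have hΓμ₁ := Real.Gamma_pos_of_pos hμ₁
  set y : ℝ := μ * (l₁ / l) / μ₁ with hy
  have hy0 : 0 < y := by rw [hy]; positivity
  have hlogy : Real.log y = Real.log μ + Real.log l₁ - Real.log l - Real.log μ₁ := by
    rw [hy, Real.log_div (by positivity) hμ₁.ne', Real.log_mul hμ.ne' (by positivity),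
      Real.log_div hl₁.ne' hl.ne']
    ring
  have hμy : μ₁ * y = μ * (l₁ / l) := by rw [hy]; field_simp
  have hE : μ₁ * Real.log (l / l₁) + μ * (l₁ / l - 1)
        + Real.log (Real.Gamma μ₁ / Real.Gamma μ) + (μ - μ₁) * digamma μ
      = μ₁ * (y - Real.log y - 1) + gfun μ μ₁ := by
    rw [Real.log_div hΓμ₁.ne' hΓμ.ne', Real.log_div hl.ne' hl₁.ne']
    unfold gfun
    rw [hlogy]
    linear_combination -hμy
  have hterm1 : 0 ≤ μ₁ * (y - Real.log y - 1) :=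
    mul_nonneg hμ₁.le (by linarith [Real.log_le_sub_one_of_pos hy0])
  have hg : 0 ≤ gfun μ μ₁ := by
    rcases eq_or_ne μ₁ μ with h | h
    · rw [h, gfun_self]
    · exact (gfun_pos hμ hμ₁ h).le
  constructor
  · rw [hE]; linarith
  · rw [hE]
    constructor
    · intro h0
      have h2 : gfun μ μ₁ = 0 := by linarith
      have hμeq : μ₁ = μ := by
        by_contra hne
        exact absurd h2 (gfun_pos hμ hμ₁ hne).ne'
      have hyeq : y = 1 := by
        by_contra hne
        have hlt := Real.log_lt_sub_one_of_pos hy0 hne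
        have : 0 < μ₁ * (y - Real.log y - 1) := mul_pos hμ₁ (by linarith)
        linarith
      refine ⟨?_, hμeq.symm⟩
      have h3 : μ * (l₁ / l) = μ₁ := by rw [← hμy, hyeq, mul_one]
      rw [hμeq] at h3
      have h5 : l₁ / l = 1 := mul_left_cancel₀ hμ.ne' (by rw [h3, mul_one])
      exact ((div_eq_one_iff_eq hl.ne').mp h5).symm
    · rintro ⟨rfl, rfl⟩
      have hy1 : y = 1 := by rw [hy]; field_simp
      rw [hy1, gfun_self, Real.log_one]
      ring
end

section
/- The function S(μ) = log Γ(μ) + μ − (μ−1)ψ(μ) is strictly increasing on (0, ∞), with S(μ) → −∞ as μ → 0⁺ and S(μ) → +∞ as μ → ∞. -/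
open Filter

open Real Topology

set_option maxHeartbeats 1000000

namespace GammaEntropy

noncomputable def psiSeq (n : ℕ) (x : ℝ) : ℝ :=
  Real.log n - ∑ m ∈ Finset.range (n + 1), (x + m)⁻¹

noncomputable def trigSeq (n : ℕ) (x : ℝ) : ℝ :=
  ∑ m ∈ Finset.range (n + 1), ((x + m) ^ 2)⁻¹

noncomputable def trig (x : ℝ) : ℝ := ∑' m : ℕ, ((x + m) ^ 2)⁻¹

noncomputable def term (x : ℝ) (m : ℕ) : ℝ := ((m : ℝ) + 1)⁻¹ - (x + m + 1)⁻¹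

noncomputable def psiLim (x : ℝ) : ℝ :=
  -Real.eulerMascheroniConstant - x⁻¹ + ∑' m : ℕ, term x m

lemma summable_base : Summable (fun m : ℕ => (((m : ℝ) + 1) ^ 2)⁻¹) := by
  have h : Summable (fun n : ℕ => 1 / (n : ℝ) ^ (2:ℝ)) := summable_one_div_nat_rpow.mpr one_lt_two
  have h2 := (summable_nat_add_iff 1).mpr h
  refine h2.congr fun m => ?_
  push_cast
  rw [one_div, ← Real.rpow_natCast (((m:ℝ))+1) 2]
  norm_num

lemma min_mul_le {a : ℝ} (ha : 0 < a) (m : ℕ) : min a 1 * ((m : ℝ) + 1) ≤ a + m := by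
  rcases le_total a 1 with h | h
  · rw [min_eq_left h]
    have : (0:ℝ) ≤ m := Nat.cast_nonneg m
    nlinarith
  · rw [min_eq_right h]
    have : (0:ℝ) ≤ m := Nat.cast_nonneg m
    nlinarith

lemma summable_sq {a : ℝ} (ha : 0 < a) : Summable (fun m : ℕ => ((a + m) ^ 2)⁻¹) := by
  have hmin : 0 < min a 1 := lt_min ha one_pos
  refine Summable.of_nonneg_of_le (fun m => by positivity)
    (fun m => ?_) (summable_base.mul_left ((min a 1)⁻¹ ^ 2))
  have h1 : min a 1 * ((m : ℝ) + 1) ≤ a + m := min_mul_le ha m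
  have h2 : (min a 1 * ((m : ℝ) + 1)) ^ 2 ≤ (a + m) ^ 2 := by
    apply pow_le_pow_left₀ (by positivity) h1
  have h3 : ((a + m) ^ 2)⁻¹ ≤ ((min a 1 * ((m : ℝ) + 1)) ^ 2)⁻¹ := by
    apply inv_anti₀ (by positivity) h2
  calc ((a + m) ^ 2)⁻¹ ≤ ((min a 1 * ((m : ℝ) + 1)) ^ 2)⁻¹ := h3
    _ = (min a 1)⁻¹ ^ 2 * ((((m : ℝ) + 1)) ^ 2)⁻¹ := by
        rw [mul_pow, mul_inv, inv_pow]

lemma term_eq {x : ℝ} (hx : 0 ≤ x) (m : ℕ) :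
    term x m = x * (((m : ℝ) + 1) * (x + m + 1))⁻¹ := by
  have h1 : ((m : ℝ) + 1) ≠ 0 := by positivity
  have h2 : (x + m + 1) ≠ 0 := by positivity
  rw [term]
  field_simp
  ring

lemma term_nonneg {x : ℝ} (hx : 0 ≤ x) (m : ℕ) : 0 ≤ term x m := by
  rw [term_eq hx m]
  positivity

lemma term_le {x b : ℝ} (hx : 0 ≤ x) (hb : x ≤ b) (m : ℕ) :
    term x m ≤ b * (((m : ℝ) + 1) ^ 2)⁻¹ := by
  rw [term_eq hx m]
  have h2 : ((m : ℝ) + 1) ^ 2 ≤ ((m : ℝ) + 1) * (x + m + 1) := by nlinarith [Nat.cast_nonneg (α := ℝ) m]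
  have h3 : (((m : ℝ) + 1) * (x + m + 1))⁻¹ ≤ (((m : ℝ) + 1) ^ 2)⁻¹ :=
    inv_anti₀ (by positivity) h2
  have h4 : 0 ≤ (((m : ℝ) + 1) * (x + m + 1))⁻¹ := by positivity
  calc x * (((m : ℝ) + 1) * (x + m + 1))⁻¹ ≤ b * (((m : ℝ) + 1) * (x + m + 1))⁻¹ :=
        mul_le_mul_of_nonneg_right hb h4
    _ ≤ b * (((m : ℝ) + 1) ^ 2)⁻¹ := mul_le_mul_of_nonneg_left h3 (le_trans hx hb)

lemma summable_term {x : ℝ} (hx : 0 ≤ x) : Summable (term x) :=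
  Summable.of_nonneg_of_le (term_nonneg hx) (term_le hx le_rfl) (summable_base.mul_left x)

end GammaEntropy

namespace GammaEntropy

lemma harmonic_cast (n : ℕ) : ((harmonic n : ℚ) : ℝ) = ∑ m ∈ Finset.range n, ((m : ℝ) + 1)⁻¹ := by
  rw [harmonic]
  push_cast
  rfl

/-- Key rearrangement identity. -/
lemma psiLim_sub_psiSeq {x : ℝ} (hx : 0 < x) (n : ℕ) :
    psiLim x - psiSeq n x =
      (((harmonic n : ℚ) : ℝ) - Real.log n - Real.eulerMascheroniConstant)
        + ∑' m : ℕ, term x (m + n) := by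
  have hsum : ∑ m ∈ Finset.range n, term x m + ∑' m : ℕ, term x (m + n) = ∑' m, term x m :=
    (summable_term hx.le).sum_add_tsum_nat_add n
  have hsplit : ∑ m ∈ Finset.range (n + 1), (x + (m : ℝ))⁻¹
      = ∑ m ∈ Finset.range n, (x + (m : ℝ) + 1)⁻¹ + x⁻¹ := by
    rw [Finset.sum_range_succ' (fun m => (x + (m : ℝ))⁻¹) n]
    push_cast
    simp [add_assoc]
  rw [psiLim, psiSeq, hsplit, ← hsum, harmonic_cast]
  have hkey : ∑ m ∈ Finset.range n, term x m + ∑ m ∈ Finset.range n, (x + (m:ℝ) + 1)⁻¹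
      = ∑ m ∈ Finset.range n, ((m : ℝ) + 1)⁻¹ := by
    rw [← Finset.sum_add_distrib]
    refine Finset.sum_congr rfl fun m _ => ?_
    simp [term]
  linarith

end GammaEntropy

namespace GammaEntropy

noncomputable def u (m : ℕ) : ℝ := (((m : ℝ) + 1) ^ 2)⁻¹

lemma tendstoUniformlyOn_psiSeq {a b : ℝ} (ha : 0 < a) (hb : 0 < b) :
    TendstoUniformlyOn psiSeq psiLim atTop (Set.Ioo a b) := by
  rw [Metric.tendstoUniformlyOn_iff]
  intro ε hε
  have hγ : ∀ᶠ n : ℕ in atTop,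
      |((harmonic n : ℚ) : ℝ) - Real.log n - Real.eulerMascheroniConstant| < ε / 2 := by
    have h := Real.tendsto_harmonic_sub_log
    rw [Metric.tendsto_atTop] at h
    obtain ⟨N, hN⟩ := h (ε / 2) (by linarith)
    filter_upwards [eventually_ge_atTop N] with n hn
    have := hN n hn
    rw [Real.dist_eq] at this
    exact this
  have htail0 : Tendsto (fun n : ℕ => b * ∑' m : ℕ, u (m + n)) atTop (𝓝 0) := by
    simpa using (tendsto_sum_nat_add u).const_mul b
  have htail : ∀ᶠ n : ℕ in atTop, b * ∑' m : ℕ, u (m + n) < ε / 2 :=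
    htail0.eventually_lt_const (by linarith)
  filter_upwards [hγ, htail] with n h1 h2
  intro x hx
  have hxpos : 0 < x := ha.trans hx.1
  have hxb : x ≤ b := le_of_lt hx.2
  have hs1 : Summable (fun m => term x (m + n)) :=
    (summable_nat_add_iff n).mpr (summable_term hxpos.le)
  have hs2 : Summable (fun m : ℕ => b * u (m + n)) :=
    ((summable_nat_add_iff n).mpr summable_base).mul_left b
  have htle : ∑' m : ℕ, term x (m + n) ≤ b * ∑' m : ℕ, u (m + n) := by
    rw [← tsum_mul_left]
    exact Summable.tsum_le_tsum (fun m => term_le hxpos.le hxb _) hs1 hs2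
  have htn : 0 ≤ ∑' m : ℕ, term x (m + n) := tsum_nonneg fun m => term_nonneg hxpos.le _
  rw [Real.dist_eq, psiLim_sub_psiSeq hxpos n]
  calc |((harmonic n : ℚ) : ℝ) - Real.log n - Real.eulerMascheroniConstant
        + ∑' m : ℕ, term x (m + n)|
      ≤ |((harmonic n : ℚ) : ℝ) - Real.log n - Real.eulerMascheroniConstant|
        + |∑' m : ℕ, term x (m + n)| := abs_add_le _ _
    _ < ε := by rw [abs_of_nonneg htn]; linarith

lemma tendstoUniformlyOn_trigSeq {a b : ℝ} (ha : 0 < a) :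
    TendstoUniformlyOn trigSeq trig atTop (Set.Ioo a b) := by
  rw [Metric.tendstoUniformlyOn_iff]
  intro ε hε
  have htail0 : Tendsto (fun n : ℕ => ∑' m : ℕ, ((a + ((m + (n + 1) : ℕ) : ℝ)) ^ 2)⁻¹)
      atTop (𝓝 0) := by
    have h := tendsto_sum_nat_add (fun m : ℕ => ((a + (m : ℝ)) ^ 2)⁻¹)
    exact (h.comp (tendsto_add_atTop_nat 1))
  have htail : ∀ᶠ n : ℕ in atTop,
      ∑' m : ℕ, ((a + ((m + (n + 1) : ℕ) : ℝ)) ^ 2)⁻¹ < ε := htail0.eventually_lt_const hε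
  filter_upwards [htail] with n h2
  intro x hx
  have hxpos : 0 < x := ha.trans hx.1
  have hax : a ≤ x := hx.1.le
  have hsx : Summable (fun m : ℕ => ((x + (m : ℝ)) ^ 2)⁻¹) := summable_sq hxpos
  have hsplit : trigSeq n x + ∑' m : ℕ, ((x + ((m + (n + 1) : ℕ) : ℝ)) ^ 2)⁻¹ = trig x :=
    hsx.sum_add_tsum_nat_add (n + 1)
  have hs1 : Summable (fun m : ℕ => ((x + ((m + (n + 1) : ℕ) : ℝ)) ^ 2)⁻¹) :=
    (summable_nat_add_iff (f := fun m : ℕ => ((x + (m : ℝ)) ^ 2)⁻¹) (n + 1)).mpr hsx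
  have hs2 : Summable (fun m : ℕ => ((a + ((m + (n + 1) : ℕ) : ℝ)) ^ 2)⁻¹) :=
    (summable_nat_add_iff (f := fun m : ℕ => ((a + (m : ℝ)) ^ 2)⁻¹) (n + 1)).mpr (summable_sq ha)
  have hle : ∑' m : ℕ, ((x + ((m + (n + 1) : ℕ) : ℝ)) ^ 2)⁻¹
      ≤ ∑' m : ℕ, ((a + ((m + (n + 1) : ℕ) : ℝ)) ^ 2)⁻¹ := by
    refine Summable.tsum_le_tsum (fun m => ?_) hs1 hs2
    have hk : (0:ℝ) ≤ ((m + (n + 1) : ℕ) : ℝ) := Nat.cast_nonneg _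
    exact inv_anti₀ (by positivity) (by nlinarith)
  have hnn : 0 ≤ ∑' m : ℕ, ((x + ((m + (n + 1) : ℕ) : ℝ)) ^ 2)⁻¹ :=
    tsum_nonneg fun m => by positivity
  rw [Real.dist_eq]
  have : trig x - trigSeq n x = ∑' m : ℕ, ((x + ((m + (n + 1) : ℕ) : ℝ)) ^ 2)⁻¹ := by
    linarith
  rw [this, abs_of_nonneg hnn]
  exact lt_of_le_of_lt hle h2

end GammaEntropy

namespace GammaEntropy

lemma hasDerivAt_logGammaSeq (n : ℕ) {x : ℝ} (hx : 0 < x) :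
    HasDerivAt (fun y => Real.BohrMollerup.logGammaSeq y n) (psiSeq n x) x := by
  have hsum : HasDerivAt (fun y : ℝ => ∑ m ∈ Finset.range (n + 1), Real.log (y + m))
      (∑ m ∈ Finset.range (n + 1), (x + (m : ℝ))⁻¹) x := by
    apply HasDerivAt.fun_sum
    intro m _
    have h1 : HasDerivAt (fun y : ℝ => y + (m : ℝ)) 1 x := (hasDerivAt_id x).add_const _
    have h2 := h1.log (by positivity)
    simpa using h2
  have h3 : HasDerivAt (fun y : ℝ => y * Real.log n + Real.log (Nat.factorial n))
      (Real.log n) x := by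
    simpa using (hasDerivAt_mul_const (Real.log n)).add_const (Real.log (Nat.factorial n))
  have h4 := h3.fun_sub hsum
  simpa [Real.BohrMollerup.logGammaSeq, psiSeq, Nat.factorial] using h4

lemma hasDerivAt_psiSeq (n : ℕ) {x : ℝ} (hx : 0 < x) :
    HasDerivAt (psiSeq n) (trigSeq n x) x := by
  have hsum : HasDerivAt (fun y : ℝ => ∑ m ∈ Finset.range (n + 1), (y + (m : ℝ))⁻¹)
      (∑ m ∈ Finset.range (n + 1), -(((x + (m : ℝ)) ^ 2)⁻¹)) x := by
    apply HasDerivAt.fun_sum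
    intro m _
    have h1 : HasDerivAt (fun y : ℝ => y + (m : ℝ)) 1 x := (hasDerivAt_id x).add_const _
    have h2 := h1.fun_inv (by positivity)
    simpa [neg_div, one_div] using h2
  have h4 := (hasDerivAt_const x (Real.log n)).sub hsum
  have h6 : 0 - ∑ m ∈ Finset.range (n + 1), -(((x + (m : ℝ)) ^ 2)⁻¹) = trigSeq n x := by
    simp [trigSeq]
  rw [← h6]
  exact h4

end GammaEntropy

namespace GammaEntropy

lemma hasDerivAt_log_Gamma_digamma {x : ℝ} (hx : 0 < x) :
    HasDerivAt (fun y => Real.log (Real.Gamma y)) (digamma x) x := by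
  have hne : ∀ m : ℕ, x ≠ -(m : ℝ) := by
    intro m
    have h1 : -(m : ℝ) ≤ 0 := neg_nonpos.mpr (Nat.cast_nonneg m)
    exact ne_of_gt (lt_of_le_of_lt h1 hx)
  have hdiff := (Real.differentiableAt_Gamma hne).hasDerivAt
  have := hdiff.log (Real.Gamma_pos_of_pos hx).ne'
  exact this

lemma hasDerivAt_log_Gamma_psiLim {x : ℝ} (hx : 0 < x) :
    HasDerivAt (fun y => Real.log (Real.Gamma y)) (psiLim x) x := by
  have hs : IsOpen (Set.Ioo (x / 2) (x + 1)) := isOpen_Ioo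
  refine hasDerivAt_of_tendstoUniformlyOn hs
    (tendstoUniformlyOn_psiSeq (by linarith) (by linarith))
    (Eventually.of_forall fun n => fun y hy => hasDerivAt_logGammaSeq n (by
      have := hy.1; linarith))
    (fun y hy => Real.BohrMollerup.tendsto_log_gamma (by have := hy.1; linarith))
    ⟨by linarith, by linarith⟩

lemma digamma_eq_psiLim {x : ℝ} (hx : 0 < x) : digamma x = psiLim x :=
  (hasDerivAt_log_Gamma_digamma hx).unique (hasDerivAt_log_Gamma_psiLim hx)

lemma hasDerivAt_digamma {x : ℝ} (hx : 0 < x) : HasDerivAt digamma (trig x) x := by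
  have hs : IsOpen (Set.Ioo (x / 2) (x + 1)) := isOpen_Ioo
  have hpsi : HasDerivAt psiLim (trig x) x := by
    refine hasDerivAt_of_tendstoUniformlyOn hs
      (tendstoUniformlyOn_trigSeq (by linarith))
      (Eventually.of_forall fun n => fun y hy => hasDerivAt_psiSeq n (by
        have := hy.1; linarith))
      (fun y hy => (tendstoUniformlyOn_psiSeq (a := x / 2) (b := x + 1) (by linarith)
        (by linarith)).tendsto_at hy)
      ⟨by linarith, by linarith⟩
  apply hpsi.congr_of_eventuallyEq
  filter_upwards [eventually_gt_nhds hx] with y hy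
  exact digamma_eq_psiLim hy

lemma trig_pos {x : ℝ} (hx : 0 < x) : 0 < trig x := by
  refine Summable.tsum_pos (summable_sq hx) (fun m => by positivity) 0 ?_
  norm_num
  positivity

lemma trig_le {x : ℝ} (hx : 1 / 2 < x) : trig x ≤ (x - 1 / 2)⁻¹ := by
  refine Real.tsum_le_of_sum_range_le (fun m => by positivity) fun n => ?_
  have hstep : ∀ m : ℕ, ((x + (m : ℝ)) ^ 2)⁻¹
      ≤ (x + (m : ℝ) - 1 / 2)⁻¹ - (x + ((m : ℕ) + 1 : ℕ) - 1 / 2 : ℝ)⁻¹ := by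
    intro m
    have hm : (0:ℝ) ≤ m := Nat.cast_nonneg m
    have hp : 0 < x + (m : ℝ) - 1 / 2 := by linarith
    have hq : 0 < x + (m : ℝ) + 1 / 2 := by linarith
    have hcast : (x + ((m : ℕ) + 1 : ℕ) - 1 / 2 : ℝ) = x + (m : ℝ) + 1 / 2 := by
      push_cast; ring
    rw [hcast, inv_sub_inv hp.ne' hq.ne']
    have hnum : (x + (m : ℝ) + 1 / 2) - (x + (m : ℝ) - 1 / 2) = 1 := by ring
    rw [hnum]
    have hden : (x + (m : ℝ) - 1 / 2) * (x + (m : ℝ) + 1 / 2) = (x + m) ^ 2 - 1 / 4 := by ring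
    rw [hden, one_div]
    apply inv_anti₀ (by nlinarith) (by nlinarith)
  calc ∑ m ∈ Finset.range n, ((x + (m : ℝ)) ^ 2)⁻¹
      ≤ ∑ m ∈ Finset.range n, ((x + (m : ℝ) - 1 / 2)⁻¹ - (x + ((m + 1 : ℕ) : ℝ) - 1 / 2)⁻¹) := by
        refine Finset.sum_le_sum fun m _ => ?_
        have := hstep m
        convert this using 3 <;> push_cast <;> ring
    _ = (x + ((0 : ℕ) : ℝ) - 1 / 2)⁻¹ - (x + ((n : ℕ) : ℝ) - 1 / 2)⁻¹ :=
        Finset.sum_range_sub' (fun m : ℕ => (x + (m : ℝ) - 1 / 2)⁻¹) n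
    _ ≤ (x - 1 / 2)⁻¹ := by
        have hn : (0:ℝ) ≤ n := Nat.cast_nonneg n
        have : 0 ≤ (x + (n : ℝ) - 1 / 2)⁻¹ := inv_nonneg.mpr (by linarith)
        norm_num
        linarith

end GammaEntropy

namespace GammaEntropy

noncomputable def Sfun : ℝ → ℝ := fun μ => Real.log (Real.Gamma μ) + μ - (μ - 1) * digamma μ

lemma hasDerivAt_Sfun {x : ℝ} (hx : 0 < x) :
    HasDerivAt Sfun (1 - (x - 1) * trig x) x := by
  have h1 := hasDerivAt_log_Gamma_digamma hx
  have h2 : HasDerivAt (fun y : ℝ => y) 1 x := hasDerivAt_id x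
  have h3 : HasDerivAt (fun y : ℝ => (y - 1) * digamma y)
      (1 * digamma x + (x - 1) * trig x) x :=
    ((hasDerivAt_id x).sub_const 1).mul (hasDerivAt_digamma hx)
  have h4 := (h1.add h2).sub h3
  have : digamma x + 1 - (1 * digamma x + (x - 1) * trig x) = 1 - (x - 1) * trig x := by ring
  rw [this] at h4
  exact h4

lemma deriv_Sfun_pos {x : ℝ} (hx : 0 < x) : 0 < 1 - (x - 1) * trig x := by
  rcases le_or_gt x 1 with h | h
  · have h1 : x - 1 ≤ 0 := by linarith
    have := mul_nonpos_of_nonpos_of_nonneg h1 (trig_pos hx).le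
    linarith
  · have h2 : (1:ℝ) / 2 < x := by linarith
    have h3 : trig x ≤ (x - 1 / 2)⁻¹ := trig_le h2
    have h4 : 0 < x - 1 / 2 := by linarith
    have h5 : (x - 1) * trig x ≤ (x - 1) * (x - 1 / 2)⁻¹ :=
      mul_le_mul_of_nonneg_left h3 (by linarith)
    have h6 : (x - 1) * (x - 1 / 2)⁻¹ < 1 := by
      rw [← div_eq_mul_inv, div_lt_one h4]
      linarith
    linarith

lemma strictMonoOn_Sfun : StrictMonoOn Sfun (Set.Ioi 0) := by
  apply strictMonoOn_of_deriv_pos (convex_Ioi 0)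
  · intro x hx
    exact ((hasDerivAt_Sfun hx).continuousAt).continuousWithinAt
  · intro x hx
    rw [interior_Ioi] at hx
    rw [(hasDerivAt_Sfun hx).deriv]
    exact deriv_Sfun_pos hx

lemma digamma_add_one {x : ℝ} (hx : 0 < x) : digamma (x + 1) = digamma x + x⁻¹ := by
  have hL0 := (hasDerivAt_log_Gamma_digamma (by linarith : (0:ℝ) < x + 1)).comp x
    ((hasDerivAt_id x).add_const 1)
  simp only [mul_one] at hL0
  have hR : HasDerivAt (fun y : ℝ => Real.log (Real.Gamma y) + Real.log y)
      (digamma x + x⁻¹) x := by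
    have := (hasDerivAt_log_Gamma_digamma hx).fun_add (Real.hasDerivAt_log hx.ne')
    simpa [one_div] using this
  have hEq : (fun y : ℝ => Real.log (Real.Gamma (y + 1)))
      =ᶠ[𝓝 x] fun y : ℝ => Real.log (Real.Gamma y) + Real.log y := by
    filter_upwards [eventually_gt_nhds hx] with y hy
    rw [Real.Gamma_add_one hy.ne', Real.log_mul hy.ne' (Real.Gamma_pos_of_pos hy).ne']
    ring
  have hL : HasDerivAt (fun y : ℝ => Real.log (Real.Gamma (y + 1))) (digamma (x + 1)) x := hL0
  have hR' := hR.congr_of_eventuallyEq hEq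
  exact hL.unique hR'

end GammaEntropy

namespace GammaEntropy

lemma tendsto_log_add_inv_atTop :
    Tendsto (fun μ : ℝ => Real.log μ + μ⁻¹) (𝓝[>] 0) atTop := by
  have h1 : Tendsto (fun μ : ℝ => μ * Real.log μ + 1) (𝓝[>] 0) (𝓝 1) := by
    have h0 : Tendsto (fun μ : ℝ => μ * Real.log μ) (𝓝 0) (𝓝 0) := by
      have := Real.continuous_mul_log.tendsto 0
      simpa using this
    have h0' := h0.mono_left (nhdsWithin_le_nhds (s := Set.Ioi (0:ℝ)))
    simpa using h0'.add_const 1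
  have h2 : Tendsto (fun μ : ℝ => (μ * Real.log μ + 1) * μ⁻¹) (𝓝[>] 0) atTop :=
    h1.pos_mul_atTop one_pos tendsto_inv_nhdsGT_zero
  apply h2.congr'
  filter_upwards [self_mem_nhdsWithin] with μ (hμ : 0 < μ)
  field_simp

lemma tendsto_Sfun_atBot : Tendsto Sfun (𝓝[>] 0) atBot := by
  have hEq : ∀ μ : ℝ, 0 < μ → Sfun μ =
      (Real.log (Real.Gamma (μ + 1)) + μ - (μ - 1) * digamma (μ + 1))
        + (1 - (Real.log μ + μ⁻¹)) := by
    intro μ hμ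
    have hG : Real.log (Real.Gamma (μ + 1)) = Real.log μ + Real.log (Real.Gamma μ) := by
      rw [Real.Gamma_add_one hμ.ne', Real.log_mul hμ.ne' (Real.Gamma_pos_of_pos hμ).ne']
    have hD := digamma_add_one hμ
    rw [Sfun, hG, hD]
    field_simp
    ring
  have hA : Tendsto (fun μ : ℝ => Real.log (Real.Gamma (μ + 1)) + μ
      - (μ - 1) * digamma (μ + 1)) (𝓝[>] 0) (𝓝 (digamma 1)) := by
    have hshift : Tendsto (fun μ : ℝ => μ + 1) (𝓝 (0:ℝ)) (𝓝 1) := by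
      simpa using (continuous_add_right (1:ℝ)).tendsto 0
    have hcontG : ContinuousAt (fun y : ℝ => Real.log (Real.Gamma y)) 1 :=
      (hasDerivAt_log_Gamma_digamma one_pos).continuousAt
    have hcontD : ContinuousAt digamma 1 := (hasDerivAt_digamma one_pos).continuousAt
    have t1 : Tendsto (fun μ : ℝ => Real.log (Real.Gamma (μ + 1))) (𝓝 0) (𝓝 0) := by
      have := hcontG.tendsto.comp hshift
      simpa [Real.Gamma_one, Function.comp_def] using this
    have t2 : Tendsto (fun μ : ℝ => digamma (μ + 1)) (𝓝 0) (𝓝 (digamma 1)) :=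
      hcontD.tendsto.comp hshift
    have t3 : Tendsto (fun μ : ℝ => Real.log (Real.Gamma (μ + 1)) + μ
        - (μ - 1) * digamma (μ + 1)) (𝓝 0) (𝓝 (0 + 0 - (0 - 1) * digamma 1)) :=
      (t1.add tendsto_id).sub ((tendsto_id.sub_const 1).mul t2)
    have : (0:ℝ) + 0 - (0 - 1) * digamma 1 = digamma 1 := by ring
    rw [this] at t3
    exact t3.mono_left nhdsWithin_le_nhds
  have hB : Tendsto (fun μ : ℝ => 1 - (Real.log μ + μ⁻¹)) (𝓝[>] 0) atBot := by
    apply Tendsto.add_atBot (tendsto_const_nhds (α := ℝ) (x := 1))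
    exact tendsto_neg_atBot_iff.mpr tendsto_log_add_inv_atTop
  have := hA.add_atBot hB
  apply this.congr'
  filter_upwards [self_mem_nhdsWithin] with μ (hμ : 0 < μ)
  rw [hEq μ hμ]

lemma tendsto_Sfun_atTop : Tendsto Sfun atTop atTop := by
  set T : ℝ → ℝ := fun μ => Sfun μ - 1 / 2 * Real.log (μ - 1 / 2) with hT
  have hTd : ∀ x : ℝ, 1 / 2 < x →
      HasDerivAt T (1 - (x - 1) * trig x - 1 / 2 * (x - 1 / 2)⁻¹) x := by
    intro x hx
    have h0 : (0:ℝ) < x := by linarith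
    have hlog : HasDerivAt (fun y : ℝ => Real.log (y - 1 / 2)) (x - 1 / 2)⁻¹ x := by
      have h1 : HasDerivAt (fun y : ℝ => y - 1 / 2) 1 x := (hasDerivAt_id x).sub_const _
      have h2 := h1.log (by linarith : x - 1 / 2 ≠ 0)
      simpa [one_div] using h2
    exact (hasDerivAt_Sfun h0).sub (hlog.const_mul (1 / 2))
  have hmono : MonotoneOn T (Set.Ici 1) := by
    apply monotoneOn_of_deriv_nonneg (convex_Ici 1)
    · intro x hx
      have : (1:ℝ) / 2 < x := by have : (1:ℝ) ≤ x := hx; linarith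
      exact (hTd x this).continuousAt.continuousWithinAt
    · intro x hx
      rw [interior_Ici] at hx
      have hx2 : (1:ℝ) / 2 < x := by have : (1:ℝ) < x := hx; linarith
      exact ((hTd x hx2).differentiableAt).differentiableWithinAt
    · intro x hx
      rw [interior_Ici] at hx
      have hx1 : (1:ℝ) < x := hx
      have hx2 : (1:ℝ) / 2 < x := by linarith
      rw [(hTd x hx2).deriv]
      have h4 : 0 < x - 1 / 2 := by linarith
      have h3 : trig x ≤ (x - 1 / 2)⁻¹ := trig_le hx2
      have h5 : (x - 1) * trig x ≤ (x - 1) * (x - 1 / 2)⁻¹ :=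
        mul_le_mul_of_nonneg_left h3 (by linarith)
      have h7 : (x - 1 / 2)⁻¹ * (x - 1 / 2) = 1 := inv_mul_cancel₀ h4.ne'
      nlinarith [inv_nonneg.mpr h4.le]
  have hlb : ∀ᶠ μ : ℝ in atTop, T 1 + 1 / 2 * Real.log (μ - 1 / 2) ≤ Sfun μ := by
    filter_upwards [eventually_ge_atTop (1:ℝ)] with μ hμ
    have := hmono (Set.self_mem_Ici) (hμ : μ ∈ Set.Ici 1) hμ
    have hT1 : T 1 = Sfun 1 - 1 / 2 * Real.log (1 - 1 / 2) := rfl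
    have hTμ : T μ = Sfun μ - 1 / 2 * Real.log (μ - 1 / 2) := rfl
    rw [hT1]
    rw [hT1, hTμ] at this
    linarith
  have hgrow : Tendsto (fun μ : ℝ => T 1 + 1 / 2 * Real.log (μ - 1 / 2)) atTop atTop := by
    apply tendsto_atTop_add_const_left
    apply Tendsto.const_mul_atTop (by norm_num : (0:ℝ) < 1 / 2)
    exact Real.tendsto_log_atTop.comp (tendsto_atTop_add_const_right _ (-(1/2)) tendsto_id)
  exact tendsto_atTop_mono' atTop hlb hgrow

end GammaEntropy


/-- `S(μ) = log Γ(μ) + μ − (μ−1)ψ(μ)` is strictly increasing on `(0,∞)`,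
with `S(μ) → −∞` as `μ → 0⁺` and `S(μ) → +∞` as `μ → ∞`. -/
theorem gamma_entropy_shape_monotone :
    StrictMonoOn (fun μ : ℝ => Real.log (Real.Gamma μ) + μ - (μ - 1) * digamma μ)
        (Set.Ioi 0) ∧
      Tendsto (fun μ : ℝ => Real.log (Real.Gamma μ) + μ - (μ - 1) * digamma μ)
        (nhdsWithin 0 (Set.Ioi 0)) atBot ∧
      Tendsto (fun μ : ℝ => Real.log (Real.Gamma μ) + μ - (μ - 1) * digamma μ)
        atTop atTop := by
  exact ⟨GammaEntropy.strictMonoOn_Sfun, GammaEntropy.tendsto_Sfun_atBot,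
    GammaEntropy.tendsto_Sfun_atTop⟩
end

section
/- The Shannon entropy of the Poisson distribution with parameter λ, H(λ) = e^{−λ} Σ_{i=0}^∞ (λ^i/i!) log(i!) − λ log λ + λ, is strictly increasing in λ on (0, ∞). -/
open Real

lemma sq_le_four_pow (n : ℕ) : ((n:ℝ))^2 ≤ 4 ^ n := by
  have h : (n:ℝ) ≤ 2 ^ n := by exact_mod_cast (Nat.lt_two_pow_self (n := n)).le
  calc ((n:ℝ))^2 ≤ ((2:ℝ)^n)^2 := by
        exact pow_le_pow_left₀ (Nat.cast_nonneg n) h 2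
  _ = 4 ^ n := by rw [← pow_mul, mul_comm, pow_mul]; norm_num

lemma log_fact_le (n : ℕ) : Real.log (Nat.factorial n) ≤ 4 ^ n := by
  have h1 : ((Nat.factorial n : ℕ) : ℝ) ≤ (n:ℝ) ^ n := by
    exact_mod_cast Nat.factorial_le_pow n
  have hlogn : Real.log n ≤ n := by
    rcases Nat.eq_zero_or_pos n with h | h
    · simp [h]
    · have := Real.log_le_sub_one_of_pos (x := (n:ℝ)) (by exact_mod_cast h)
      linarith
  calc Real.log (Nat.factorial n) ≤ Real.log ((n:ℝ)^n) := by
        apply Real.log_le_log (by exact_mod_cast Nat.factorial_pos n) h1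
  _ = n * Real.log n := Real.log_pow n n
  _ ≤ n * n := by
      apply mul_le_mul_of_nonneg_left hlogn (Nat.cast_nonneg n)
  _ ≤ 4 ^ n := by have := sq_le_four_pow n; nlinarith

lemma summable_aux (x : ℝ) (c : ℕ → ℝ) (hc : ∀ i, |c i| ≤ 4 * 4 ^ i) :
    Summable (fun i : ℕ => x ^ i / (Nat.factorial i : ℝ) * c i) := by
  apply Summable.of_norm_bounded ((Real.summable_pow_div_factorial (4*|x|)).mul_left 4)
  intro i
  have hfac : (0:ℝ) < (Nat.factorial i : ℝ) := by exact_mod_cast Nat.factorial_pos i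
  have h1 : ‖x ^ i / (Nat.factorial i : ℝ) * c i‖ = |x| ^ i / (Nat.factorial i : ℝ) * |c i| := by
    rw [norm_mul, norm_div, norm_pow]
    simp [abs_of_pos hfac, Real.norm_eq_abs]
  rw [h1]
  have h2 : |x| ^ i / (Nat.factorial i : ℝ) * |c i| ≤ |x| ^ i / (Nat.factorial i : ℝ) * (4 * 4 ^ i) := by
    apply mul_le_mul_of_nonneg_left (hc i) (by positivity)
  refine h2.trans (le_of_eq ?_)
  rw [mul_pow]
  field_simp

lemma deriv_term_bound (R : ℝ) (hR : 1 ≤ R) (i : ℕ) (y : ℝ) (hy : |y| ≤ R) :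
    ‖(i : ℝ) * y ^ (i-1) / (Nat.factorial i : ℝ) * Real.log (Nat.factorial i)‖
      ≤ (8*R) ^ i / (Nat.factorial i : ℝ) := by
  have hfac : (0:ℝ) < (Nat.factorial i : ℝ) := by exact_mod_cast Nat.factorial_pos i
  have hlog0 : 0 ≤ Real.log (Nat.factorial i) :=
    Real.log_nonneg (by exact_mod_cast Nat.one_le_iff_ne_zero.2 (Nat.factorial_ne_zero i))
  have h1 : ‖(i : ℝ) * y ^ (i-1) / (Nat.factorial i : ℝ) * Real.log (Nat.factorial i)‖
      = (i : ℝ) * |y| ^ (i-1) / (Nat.factorial i : ℝ) * Real.log (Nat.factorial i) := by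
    rw [Real.norm_eq_abs, abs_mul, abs_div, abs_mul, abs_pow, Nat.abs_cast,
      abs_of_pos hfac, abs_of_nonneg hlog0]
  rw [h1]
  have hi : (i : ℝ) ≤ 2 ^ i := by exact_mod_cast (Nat.lt_two_pow_self (n := i)).le
  have hyR : |y| ^ (i-1) ≤ R ^ i := by
    calc |y| ^ (i-1) ≤ R ^ (i-1) := pow_le_pow_left₀ (abs_nonneg y) hy _
    _ ≤ R ^ i := pow_le_pow_right₀ hR (Nat.sub_le i 1)
  have hl := log_fact_le i
  have key : (i : ℝ) * |y| ^ (i-1) * Real.log (Nat.factorial i) ≤ (8*R) ^ i := by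
    have h2 : (i : ℝ) * |y| ^ (i-1) * Real.log (Nat.factorial i)
        ≤ 2 ^ i * R ^ i * 4 ^ i := by
      have p1 : (0:ℝ) ≤ |y| ^ (i-1) := by positivity
      have p2 : (0:ℝ) ≤ (i:ℝ) := Nat.cast_nonneg i
      have p4 : (0:ℝ) ≤ R ^ i := by positivity
      have p5 : (0:ℝ) < (2:ℝ) ^ i := by positivity
      nlinarith [mul_le_mul hi hyR p1 p5.le, mul_le_mul_of_nonneg_left hl (mul_nonneg p5.le p4)]
    calc _ ≤ 2 ^ i * R ^ i * 4 ^ i := h2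
    _ = (8*R) ^ i := by
        rw [mul_pow, show (8:ℝ)^i = 2^i * 4^i by rw [← mul_pow]; norm_num]; ring
  calc (i : ℝ) * |y| ^ (i-1) / (Nat.factorial i : ℝ) * Real.log (Nat.factorial i)
      = (i : ℝ) * |y| ^ (i-1) * Real.log (Nat.factorial i) / (Nat.factorial i : ℝ) := by ring
  _ ≤ (8*R) ^ i / (Nat.factorial i : ℝ) := by
      gcongr

lemma hc1 : ∀ i : ℕ, |Real.log (Nat.factorial i)| ≤ 4 * 4 ^ i := by
  intro i
  have hlog0 : 0 ≤ Real.log (Nat.factorial i) :=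
    Real.log_nonneg (by exact_mod_cast Nat.one_le_iff_ne_zero.2 (Nat.factorial_ne_zero i))
  rw [abs_of_nonneg hlog0]
  have h4 : (1:ℝ) ≤ 4 ^ i := one_le_pow₀ (by norm_num)
  nlinarith [log_fact_le i]

lemma hc2 : ∀ i : ℕ, |Real.log (Nat.factorial (i+1))| ≤ 4 * 4 ^ i := by
  intro i
  have hlog0 : 0 ≤ Real.log (Nat.factorial (i+1)) :=
    Real.log_nonneg (by exact_mod_cast Nat.one_le_iff_ne_zero.2 (Nat.factorial_ne_zero (i+1)))
  rw [abs_of_nonneg hlog0]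
  calc Real.log (Nat.factorial (i+1)) ≤ 4 ^ (i+1) := log_fact_le (i+1)
  _ = 4 * 4 ^ i := by ring

lemma hc3 : ∀ i : ℕ, |Real.log ((i:ℝ)+1)| ≤ 4 * 4 ^ i := by
  intro i
  have h : Real.log ((i:ℝ)+1) ≤ Real.log (Nat.factorial (i+1)) := by
    apply Real.log_le_log (by
      have : (0:ℝ) ≤ i := Nat.cast_nonneg i
      linarith)
    exact_mod_cast Nat.self_le_factorial (i+1)
  have h0 : 0 ≤ Real.log ((i:ℝ)+1) := Real.log_nonneg (by
    have : (0:ℝ) ≤ i := Nat.cast_nonneg i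
    linarith)
  rw [abs_of_nonneg h0]
  calc Real.log ((i:ℝ)+1) ≤ Real.log (Nat.factorial (i+1)) := h
  _ ≤ |Real.log (Nat.factorial (i+1))| := le_abs_self _
  _ ≤ 4 * 4 ^ i := hc2 i

lemma summable_deriv (x : ℝ) :
    Summable (fun i : ℕ => (i : ℝ) * x ^ (i-1) / (Nat.factorial i : ℝ) * Real.log (Nat.factorial i)) := by
  apply Summable.of_norm_bounded (g := fun i => (8*(|x|+1)) ^ i / (Nat.factorial i : ℝ))
    (Real.summable_pow_div_factorial _)
  intro i
  exact deriv_term_bound (|x|+1) (by linarith [abs_nonneg x]) i x (by linarith [abs_nonneg x])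

lemma shift_eq (x : ℝ) :
    (∑' i : ℕ, (i : ℝ) * x ^ (i-1) / (Nat.factorial i : ℝ) * Real.log (Nat.factorial i))
      = ∑' i : ℕ, x ^ i / (Nat.factorial i : ℝ) * Real.log (Nat.factorial (i+1)) := by
  rw [Summable.tsum_eq_zero_add (summable_deriv x)]
  simp only [Nat.cast_zero, zero_mul, zero_div, zero_mul, zero_add]
  congr 1
  funext i
  have hfac : ((Nat.factorial (i+1) : ℕ) : ℝ) = ((i:ℝ)+1) * (Nat.factorial i : ℝ) := by
    rw [Nat.factorial_succ]; push_cast; ring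
  have hfi : (0:ℝ) < (Nat.factorial i : ℝ) := by exact_mod_cast Nat.factorial_pos i
  have : ((i:ℝ)+1) * x ^ i / (Nat.factorial (i+1) : ℝ) = x ^ i / (Nat.factorial i : ℝ) := by
    rw [hfac]; field_simp
  rw [show ((i + 1 : ℕ) : ℝ) = (i:ℝ)+1 by push_cast; ring, Nat.add_sub_cancel, ← this]

lemma hasDerivAt_g (x : ℝ) :
    HasDerivAt (fun y : ℝ => ∑' i : ℕ, y ^ i / (Nat.factorial i : ℝ) * Real.log (Nat.factorial i))
      (∑' i : ℕ, x ^ i / (Nat.factorial i : ℝ) * Real.log (Nat.factorial (i+1))) x := by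
  rw [← shift_eq]
  set R : ℝ := |x| + 1 with hR
  have hR1 : (1:ℝ) ≤ R := by rw [hR]; linarith [abs_nonneg x]
  apply hasDerivAt_tsum_of_isPreconnected
    (Real.summable_pow_div_factorial (8*R)) (Metric.isOpen_ball (x := (0:ℝ)) (ε := R))
    (convex_ball (0:ℝ) R).isPreconnected
    (g' := fun (i : ℕ) (y : ℝ) => (i : ℝ) * y ^ (i-1) / (Nat.factorial i : ℝ) * Real.log (Nat.factorial i))
    (y₀ := 0) ?_ ?_ ?_ ?_ ?_
  · intro n y _
    have := (hasDerivAt_pow n y).div_const (Nat.factorial n : ℝ)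
    simpa using this.mul_const (Real.log (Nat.factorial n))
  · intro n y hy
    rw [Metric.mem_ball, Real.dist_eq, sub_zero] at hy
    exact deriv_term_bound R hR1 n y hy.le
  · exact Metric.mem_ball_self (by linarith [abs_nonneg x])
  · exact summable_aux 0 _ hc1
  · rw [Metric.mem_ball, Real.dist_eq, sub_zero]; rw [hR]; linarith

lemma tsum_exp (x : ℝ) : (∑' i : ℕ, x ^ i / (Nat.factorial i : ℝ)) = Real.exp x := by
  rw [Real.exp_eq_exp_ℝ, NormedSpace.exp_eq_tsum_div]

lemma tsum_exp_shift (x : ℝ) :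
    (∑' i : ℕ, x ^ (i+1) / (Nat.factorial (i+1) : ℝ)) = Real.exp x - 1 := by
  have hs := Real.summable_pow_div_factorial x
  have h := Summable.tsum_eq_zero_add hs
  rw [tsum_exp] at h
  simp only [pow_zero, Nat.factorial_zero, Nat.cast_one, div_one] at h
  linarith

lemma log_diff (i : ℕ) :
    Real.log (Nat.factorial (i+1)) - Real.log (Nat.factorial i) = Real.log ((i:ℝ)+1) := by
  have hfac : ((Nat.factorial (i+1) : ℕ) : ℝ) = ((i:ℝ)+1) * (Nat.factorial i : ℝ) := by
    rw [Nat.factorial_succ]; push_cast; ring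
  have h1 : ((i:ℝ)+1) ≠ 0 := by positivity
  have h2 : ((Nat.factorial i : ℕ) : ℝ) ≠ 0 := by
    exact_mod_cast Nat.factorial_ne_zero i
  rw [hfac, Real.log_mul h1 h2]; ring

lemma key_ineq (l : ℝ) (hl : 0 < l) :
    Real.log l < Real.exp (-l) * ∑' i : ℕ, l ^ i / (Nat.factorial i : ℝ) * Real.log ((i:ℝ)+1) := by
  set T := ∑' i : ℕ, l ^ i / (Nat.factorial i : ℝ) * Real.log ((i:ℝ)+1) with hT
  have hsexp := Real.summable_pow_div_factorial l
  have hsshift : Summable (fun i : ℕ => l ^ (i+1) / (Nat.factorial (i+1) : ℝ)) :=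
    (summable_nat_add_iff 1).2 hsexp
  have hsL : Summable (fun i : ℕ => l ^ i / (Nat.factorial i : ℝ) * (Real.log l + 1)) :=
    hsexp.mul_right _
  have hsLHS : Summable (fun i : ℕ =>
      l ^ i / (Nat.factorial i : ℝ) * (Real.log l + 1) - l ^ (i+1) / (Nat.factorial (i+1) : ℝ)) :=
    hsL.sub hsshift
  have hsT : Summable (fun i : ℕ => l ^ i / (Nat.factorial i : ℝ) * Real.log ((i:ℝ)+1)) :=
    summable_aux l _ hc3
  have hterm : ∀ i : ℕ,
      l ^ i / (Nat.factorial i : ℝ) * (Real.log l + 1) - l ^ (i+1) / (Nat.factorial (i+1) : ℝ)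
        ≤ l ^ i / (Nat.factorial i : ℝ) * Real.log ((i:ℝ)+1) := by
    intro i
    have hi1 : (0:ℝ) < (i:ℝ)+1 := by positivity
    have hlog : Real.log l + 1 - l / ((i:ℝ)+1) ≤ Real.log ((i:ℝ)+1) := by
      have h := Real.log_le_sub_one_of_pos (x := l / ((i:ℝ)+1)) (by positivity)
      rw [Real.log_div (ne_of_gt hl) (ne_of_gt hi1)] at h
      have hd : l / ((i:ℝ)+1) - 1 ≥ Real.log l - Real.log ((i:ℝ)+1) := h
      linarith
    have hw : (0:ℝ) < l ^ i / (Nat.factorial i : ℝ) := by positivity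
    have hmul := mul_le_mul_of_nonneg_left hlog hw.le
    have heq : l ^ i / (Nat.factorial i : ℝ) * (l / ((i:ℝ)+1))
        = l ^ (i+1) / (Nat.factorial (i+1) : ℝ) := by
      have hfac : ((Nat.factorial (i+1) : ℕ) : ℝ) = ((i:ℝ)+1) * (Nat.factorial i : ℝ) := by
        rw [Nat.factorial_succ]; push_cast; ring
      have hfi : (0:ℝ) < (Nat.factorial i : ℝ) := by exact_mod_cast Nat.factorial_pos i
      rw [hfac]
      field_simp
      ring
    rw [mul_sub, heq] at hmul
    exact hmul
  have hle : Real.exp l * (Real.log l + 1) - (Real.exp l - 1) ≤ T := by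
    have := Summable.tsum_le_tsum hterm hsLHS hsT
    rw [Summable.tsum_sub hsL hsshift, tsum_mul_right, tsum_exp, tsum_exp_shift] at this
    exact this
  have hE : (0:ℝ) < Real.exp (-l) := Real.exp_pos _
  have h2 : Real.exp (-l) * (Real.exp l * Real.log l + 1) ≤ Real.exp (-l) * T := by
    apply mul_le_mul_of_nonneg_left ?_ hE.le
    linarith
  have h3 : Real.exp (-l) * (Real.exp l * Real.log l + 1)
      = Real.log l + Real.exp (-l) := by
    have : Real.exp (-l) * Real.exp l = 1 := by
      rw [← Real.exp_add]; simp
    rw [mul_add, ← mul_assoc, this, one_mul, mul_one]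
  linarith [h2, h3.symm.le, hE]

lemma hasDerivAt_H (x : ℝ) (hx : x ≠ 0) :
    HasDerivAt (fun l : ℝ =>
        Real.exp (-l) * (∑' i : ℕ, l ^ i / (Nat.factorial i : ℝ) * Real.log (Nat.factorial i))
          - l * Real.log l + l)
      (Real.exp (-x) * (∑' i : ℕ, x ^ i / (Nat.factorial i : ℝ) * Real.log ((i:ℝ)+1))
        - Real.log x) x := by
  have h1 : HasDerivAt (fun l : ℝ => Real.exp (-l)) (-Real.exp (-x)) x := by
    simpa using (hasDerivAt_neg x).exp
  have h2 := hasDerivAt_g x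
  have hprod := h1.mul h2
  have h3 := Real.hasDerivAt_mul_log hx
  have h4 := (hprod.sub h3).add (hasDerivAt_id x)
  convert h4 using 1
  · rfl
  · rfl
  · rfl
  have hdiff : (∑' i : ℕ, x ^ i / (Nat.factorial i : ℝ) * Real.log ((i:ℝ)+1))
      = (∑' i : ℕ, x ^ i / (Nat.factorial i : ℝ) * Real.log (Nat.factorial (i+1)))
        - (∑' i : ℕ, x ^ i / (Nat.factorial i : ℝ) * Real.log (Nat.factorial i)) := by
    rw [← Summable.tsum_sub (summable_aux x _ hc2) (summable_aux x _ hc1)]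
    congr 1
    funext i
    rw [← mul_sub, log_diff i]
  rw [hdiff]
  ring

/-- The Shannon entropy of the Poisson distribution,
`H(λ) = e^{−λ} Σ_{i≥0} (λ^i/i!) log(i!) − λ log λ + λ`,
is strictly increasing in `λ` on `(0,∞)`. -/
theorem poisson_entropy_strictMono :
    StrictMonoOn
      (fun l : ℝ =>
        Real.exp (-l) * (∑' i : ℕ, l ^ i / (Nat.factorial i) * Real.log (Nat.factorial i))
          - l * Real.log l + l)
      (Set.Ioi 0) := by
  apply strictMonoOn_of_deriv_pos (convex_Ioi 0)
  · intro x hx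
    exact (hasDerivAt_H x (ne_of_gt hx)).continuousAt.continuousWithinAt
  · intro x hx
    rw [interior_Ioi] at hx
    rw [(hasDerivAt_H x (ne_of_gt hx)).deriv]
    have := key_ineq x hx
    linarith
end

section
/- The limit as λ → ∞ of e^{−λ} Σ_{i=1}^∞ (λ^i/i!) log(i+1) − log λ equals 0. Equivalently, E[log(X_λ + 1)] − log λ → 0 as λ → ∞, where X_λ is Poisson with mean λ. -/
open Filter

private lemma exp_tsum' (l : ℝ) : ∑' n : ℕ, l ^ n / n.factorial = Real.exp l := by
  rw [Real.exp_eq_exp_ℝ, NormedSpace.exp_eq_tsum_div]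

private lemma sum_bounds (l : ℝ) (hl : 1 ≤ l) :
    Real.log l * Real.exp l ≤
      (∑' i : ℕ, l ^ (i + 1) / (Nat.factorial (i + 1)) * Real.log ((i + 1 : ℕ) + 1)) ∧
    (∑' i : ℕ, l ^ (i + 1) / (Nat.factorial (i + 1)) * Real.log ((i + 1 : ℕ) + 1)) ≤
      Real.exp l * Real.log (l + 1) + 1 := by
  have hl0 : (0:ℝ) < l := lt_of_lt_of_le one_pos hl
  set E := Real.exp l with hE
  set a : ℕ → ℝ := fun j => l ^ (j + 1) / (Nat.factorial (j + 1)) with ha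
  set b : ℕ → ℝ := fun j => l ^ (j + 1) / (Nat.factorial j) with hb
  set c : ℕ → ℝ := fun j => l ^ (j + 2) / (Nat.factorial (j + 2)) with hc
  set f : ℕ → ℝ := fun j => l ^ (j + 1) / (Nat.factorial (j + 1)) * Real.log ((j + 1 : ℕ) + 1)
    with hf
  have sExp : Summable (fun n : ℕ => l ^ n / n.factorial) := Real.summable_pow_div_factorial l
  have sa : Summable a := by
    have := sExp.comp_injective (add_left_injective 1)
    exact this
  have sc : Summable c := by
    have := sExp.comp_injective (add_left_injective 2)
    exact this
  have hbeq : b = fun j => l * (l ^ j / j.factorial) := by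
    funext j; simp only [hb, pow_succ]; ring
  have sb : Summable b := by rw [hbeq]; exact sExp.mul_left l
  -- positivity facts
  have hfacpos : ∀ j : ℕ, (0:ℝ) < (Nat.factorial j : ℝ) := fun j =>
    Nat.cast_pos.mpr (Nat.factorial_pos j)
  have hanon : ∀ j, 0 ≤ a j := fun j => by
    apply div_nonneg (pow_nonneg hl0.le _) (hfacpos _).le
  -- cast of log argument
  have hcast : ∀ j : ℕ, ((j + 1 : ℕ) : ℝ) + 1 = (j:ℝ) + 2 := by intro j; push_cast; ring
  have hlognn : ∀ j : ℕ, 0 ≤ Real.log ((j + 1 : ℕ) + 1) := fun j => by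
    rw [hcast]
    apply Real.log_nonneg; have : (0:ℝ) ≤ (j:ℝ) := Nat.cast_nonneg j; linarith
  -- f ≤ b pointwise, hence summable
  have hfb : ∀ j, f j ≤ b j := by
    intro j
    have hx : (0:ℝ) ≤ (j:ℝ) := Nat.cast_nonneg j
    have hlog : Real.log ((j + 1 : ℕ) + 1) ≤ (j:ℝ) + 1 := by
      rw [hcast]
      have := Real.log_le_sub_one_of_pos (show (0:ℝ) < (j:ℝ)+2 by linarith)
      linarith
    have hfs : ((Nat.factorial (j+1) : ℕ) : ℝ) = ((j:ℝ)+1) * (Nat.factorial j : ℝ) := by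
      rw [Nat.factorial_succ]; push_cast; ring
    have h1 : f j ≤ a j * ((j:ℝ) + 1) :=
      mul_le_mul_of_nonneg_left hlog (hanon j)
    have h2 : a j * ((j:ℝ) + 1) = b j := by
      simp only [ha, hb, hfs]
      field_simp
    linarith [h1, h2 ▸ h1]
  have sf : Summable f := Summable.of_nonneg_of_le
    (fun j => mul_nonneg (hanon j) (hlognn j)) hfb sb
  -- sum identities
  have hA : ∑' j, a j = E - 1 := by
    have := Summable.tsum_eq_zero_add sExp
    rw [exp_tsum'] at this
    simp only [pow_zero, Nat.factorial_zero, Nat.cast_one] at this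
    have : E = 1 + ∑' j, a j := by simpa using this
    linarith
  have hB : ∑' j, b j = l * E := by
    rw [hbeq, tsum_mul_left, exp_tsum']
  have hC : ∑' j, c j = E - 1 - l := by
    have h1 := Summable.tsum_eq_zero_add sa
    have ha0 : a 0 = l := by simp [ha, Nat.factorial]
    have ha1 : (fun j => a (j + 1)) = c := by funext j; simp [ha, hc]
    rw [hA, ha0, ha1] at h1
    linarith
  constructor
  · -- lower bound: f j ≥ (log l + 1) * a j - c j
    have hpt : ∀ j, (Real.log l + 1) * a j - c j ≤ f j := by
      intro j
      have hx : (0:ℝ) ≤ (j:ℝ) := Nat.cast_nonneg j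
      have hx2 : (0:ℝ) < (j:ℝ) + 2 := by linarith
      have hlog : Real.log l + 1 - l / ((j:ℝ)+2) ≤ Real.log ((j + 1 : ℕ) + 1) := by
        rw [hcast]
        have h := Real.log_le_sub_one_of_pos (show (0:ℝ) < l / ((j:ℝ)+2) from div_pos hl0 hx2)
        rw [Real.log_div (ne_of_gt hl0) (ne_of_gt hx2)] at h
        linarith
      have h1 : a j * (Real.log l + 1 - l / ((j:ℝ)+2)) ≤ f j :=
        mul_le_mul_of_nonneg_left hlog (hanon j)
      have hfs2 : ((Nat.factorial (j+2) : ℕ) : ℝ)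
          = ((j:ℝ)+2) * (Nat.factorial (j+1) : ℝ) := by
        rw [show j + 2 = (j+1) + 1 from rfl, Nat.factorial_succ]; push_cast; ring
      have h2 : a j * (Real.log l + 1 - l / ((j:ℝ)+2))
          = (Real.log l + 1) * a j - c j := by
        simp only [ha, hc, hfs2]
        have hf1 : ((Nat.factorial (j+1) : ℕ) : ℝ) ≠ 0 := ne_of_gt (hfacpos _)
        field_simp
        ring
      linarith [h2 ▸ h1]
    have hsum : ∑' j, ((Real.log l + 1) * a j - c j) ≤ ∑' j, f j :=
      Summable.tsum_le_tsum hpt ((sa.mul_left _).sub sc) sf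
    rw [Summable.tsum_sub (sa.mul_left _) sc, tsum_mul_left, hA, hC] at hsum
    have hll : Real.log l ≤ l := by
      have := Real.log_le_sub_one_of_pos hl0; linarith
    calc Real.log l * E ≤ (Real.log l + 1) * (E - 1) - (E - 1 - l) := by nlinarith
      _ ≤ ∑' j, f j := hsum
  · -- upper bound
    set L := Real.log (l + 1) with hL
    have hLnn : 0 ≤ L := Real.log_nonneg (by linarith)
    have hl1 : (0:ℝ) < l + 1 := by linarith
    set c1 : ℝ := L + 1/(l+1) - 1 with hc1
    set c2 : ℝ := 1/(l+1) with hc2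
    have hpt : ∀ j, f j ≤ c1 * a j + c2 * b j := by
      intro j
      have hx : (0:ℝ) ≤ (j:ℝ) := Nat.cast_nonneg j
      have hx2 : (0:ℝ) < (j:ℝ) + 2 := by linarith
      have hlog : Real.log ((j + 1 : ℕ) + 1) ≤ L + ((j:ℝ)+2)/(l+1) - 1 := by
        rw [hcast]
        have h := Real.log_le_sub_one_of_pos (div_pos hx2 hl1)
        rw [Real.log_div (ne_of_gt hx2) (ne_of_gt hl1)] at h
        linarith
      have h1 : f j ≤ a j * (L + ((j:ℝ)+2)/(l+1) - 1) :=
        mul_le_mul_of_nonneg_left hlog (hanon j)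
      have hfs : ((Nat.factorial (j+1) : ℕ) : ℝ) = ((j:ℝ)+1) * (Nat.factorial j : ℝ) := by
        rw [Nat.factorial_succ]; push_cast; ring
      have h2 : a j * (L + ((j:ℝ)+2)/(l+1) - 1) = c1 * a j + c2 * b j := by
        simp only [ha, hb, hc1, hc2, hfs]
        have hf0 : (Nat.factorial j : ℝ) ≠ 0 := ne_of_gt (hfacpos _)
        have hj1 : ((j:ℝ)+1) ≠ 0 := by positivity
        field_simp
        ring
      linarith [h2 ▸ h1]
    have hsum : ∑' j, f j ≤ ∑' j, (c1 * a j + c2 * b j) :=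
      Summable.tsum_le_tsum hpt sf ((sa.mul_left _).add (sb.mul_left _))
    rw [Summable.tsum_add (sa.mul_left _) (sb.mul_left _), tsum_mul_left, tsum_mul_left, hA, hB] at hsum
    have hEpos : (0:ℝ) < E := Real.exp_pos l
    calc ∑' j, f j ≤ c1 * (E - 1) + c2 * (l * E) := hsum
      _ ≤ E * L + 1 := by
          rw [hc1, hc2]
          have h1 : (0:ℝ) < 1/(l+1) := by positivity
          have key : (L + 1/(l+1) - 1) * (E - 1) + 1/(l+1) * (l * E) - (E * L + 1)
              = -L - 1/(l+1) := by
            field_simp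
            ring
          linarith [hLnn, h1]

/-- `e^{−λ} Σ_{i≥1} (λ^i/i!) log(i+1) − log λ → 0` as `λ → ∞`. -/
theorem poisson_entropy_deriv_tendsto_zero :
    Tendsto
      (fun l : ℝ =>
        Real.exp (-l) * (∑' i : ℕ, l ^ (i + 1) / (Nat.factorial (i + 1)) *
            Real.log ((i + 1 : ℕ) + 1))
          - Real.log l)
      atTop (nhds 0) := by
  have hU : Tendsto (fun l : ℝ => Real.log (l+1) - Real.log l + Real.exp (-l))
      atTop (nhds 0) := by
    have T1 : Tendsto (fun l : ℝ => Real.log (l+1) - Real.log l) atTop (nhds 0) := by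
      have h0 : Tendsto (fun l : ℝ => 1 + l⁻¹) atTop (nhds 1) := by
        simpa using tendsto_const_nhds.add tendsto_inv_atTop_zero (f := fun l : ℝ => (1:ℝ))
      have h1 : Tendsto (fun l : ℝ => Real.log (1 + l⁻¹)) atTop (nhds 0) := by
        have := (Real.continuousAt_log (one_ne_zero)).tendsto.comp h0
        simpa [Function.comp_def] using this
      apply h1.congr'
      filter_upwards [eventually_ge_atTop (1:ℝ)] with l hl
      have hl0 : (0:ℝ) < l := lt_of_lt_of_le one_pos hl
      rw [show (1:ℝ) + l⁻¹ = (l+1)/l by field_simp,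
        Real.log_div (by positivity) (ne_of_gt hl0)]
    have T2 : Tendsto (fun l : ℝ => Real.exp (-l)) atTop (nhds 0) := by
      exact Real.tendsto_exp_neg_atTop_nhds_zero
    simpa using T1.add T2
  apply tendsto_of_tendsto_of_tendsto_of_le_of_le' (tendsto_const_nhds (x := (0:ℝ))) hU
  · filter_upwards [eventually_ge_atTop (1:ℝ)] with l hl
    have h := (sum_bounds l hl).1
    have hEpos : (0:ℝ) < Real.exp l := Real.exp_pos l
    have : Real.log l ≤ Real.exp (-l) * (∑' i : ℕ, l ^ (i + 1) / (Nat.factorial (i + 1)) *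
        Real.log ((i + 1 : ℕ) + 1)) := by
      rw [Real.exp_neg, inv_mul_eq_div, le_div_iff₀ hEpos]
      exact h
    linarith
  · filter_upwards [eventually_ge_atTop (1:ℝ)] with l hl
    have h := (sum_bounds l hl).2
    have hEpos : (0:ℝ) < Real.exp l := Real.exp_pos l
    have h2 : Real.exp (-l) * (∑' i : ℕ, l ^ (i + 1) / (Nat.factorial (i + 1)) *
        Real.log ((i + 1 : ℕ) + 1)) ≤ Real.exp (-l) * (Real.exp l * Real.log (l+1) + 1) :=
      mul_le_mul_of_nonneg_left h (Real.exp_pos _).le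
    have h3 : Real.exp (-l) * (Real.exp l * Real.log (l+1) + 1)
        = Real.log (l+1) + Real.exp (-l) := by
      rw [Real.exp_neg]
      field_simp
    linarith [h3 ▸ h2]
end
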